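/- Let Φ ∈ ℝ^{np×n} be (n-stacked) q-error correctable, x ∈ ℝⁿ, e ∈ Σ_qⁿ, v ∈ ℝ^{np} with ‖v_i‖₂ ≤ v_max for all blocks i, ẑ = Φx + e + v, and fix an integer r with q ≤ r ≤ 2q and v'_max := ϑ_{p,q,r}(Φ)·v_max. If a vector x̂ ∈ ℝⁿ satisfies |{i ∈ {1,…,p} : ‖ẑ_i − Φ_{Γᵢⁿ}x̂‖₂ > v'_max}| ≤ q, then ‖x̂ − x‖₂ ≤ κ^c_{p,q,r}(Φ)·v_max, where κ^c_{p,q,r}(Φ) := (ϑ_{p,q,r}(Φ) + 1)√(p−2q)/ρ_{p,2q}(Φ). -/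

import Mathlib

open scoped Classical
open Finset Matrix

noncomputable section

namespace SecureEst

variable {n p : ℕ}

/-- The `i`-th `n`-block of an `n`-stacked vector. -/
def blk (z : Fin p × Fin n → ℝ) (i : Fin p) : Fin n → ℝ := fun j => z (i, j)

/-- The `n`-stacked support of a stacked vector. -/
def blockSupp (z : Fin p × Fin n → ℝ) : Finset (Fin p) :=
  Finset.univ.filter fun i => blk z i ≠ 0

/-- The `n`-stacked ℓ⁰ "norm": number of nonzero blocks. -/
def l0n (z : Fin p × Fin n → ℝ) : ℕ := (blockSupp z).card

/-- `n`-stacked `q`-sparsity: membership in `Σ_qⁿ`. -/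
def Sparse (q : ℕ) (z : Fin p × Fin n → ℝ) : Prop := l0n z ≤ q

/-- Euclidean (ℓ²) norm of a real vector. -/
def eNorm2 {m : Type*} [Fintype m] (x : m → ℝ) : ℝ := Real.sqrt (∑ i, x i ^ 2)

/-- `Φ_{Λⁿ}`: zero out the row-blocks of `Φ` outside `Λ`. -/
def zeroB (Λ : Finset (Fin p)) (Φ : Matrix (Fin p × Fin n) (Fin n) ℝ) :
    Matrix (Fin p × Fin n) (Fin n) ℝ :=
  fun ij k => if ij.1 ∈ Λ then Φ ij k else 0

/-- `z_{Λⁿ}`: zero out the blocks of a stacked vector outside `Λ`. -/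
def zeroV (Λ : Finset (Fin p)) (z : Fin p × Fin n → ℝ) : Fin p × Fin n → ℝ :=
  fun ij => if ij.1 ∈ Λ then z ij else 0

/-- `Φ_{Γᵢⁿ}`: the `i`-th row-block of `Φ`. -/
def rowBlk (Φ : Matrix (Fin p × Fin n) (Fin n) ℝ) (i : Fin p) :
    Matrix (Fin n) (Fin n) ℝ := fun j k => Φ (i, j) k

/-- Moore–Penrose pseudoinverse (full-column-rank formula `(MᵀM)⁻¹Mᵀ`). -/
def pinv {m k : Type*} [Fintype m] [Fintype k] [DecidableEq k]
    (M : Matrix m k ℝ) : Matrix k m ℝ := (Mᵀ * M)⁻¹ * Mᵀ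

/-- Spectral norm (largest singular value) of a real matrix. -/
def specNorm {m k : Type*} [Fintype m] [Fintype k] (M : Matrix m k ℝ) : ℝ :=
  sSup {r | ∃ x : k → ℝ, eNorm2 x = 1 ∧ r = eNorm2 (M.mulVec x)}

/-- Minimum singular value of a (tall) real matrix. -/
def sigmaMin {m k : Type*} [Fintype m] [Fintype k] (M : Matrix m k ℝ) : ℝ :=
  sInf {r | ∃ x : k → ℝ, eNorm2 x = 1 ∧ r = eNorm2 (M.mulVec x)}

/-- `(n-stacked) q`-error detectability. -/
def ErrDetectable (Φ : Matrix (Fin p × Fin n) (Fin n) ℝ) (q : ℕ) : Prop :=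
  ∀ x x' : Fin n → ℝ, ∀ e : Fin p × Fin n → ℝ,
    Sparse q e → Φ.mulVec x + e = Φ.mulVec x' → x = x'

/-- `(n-stacked) q`-error correctability. -/
def ErrCorrectable (Φ : Matrix (Fin p × Fin n) (Fin n) ℝ) (q : ℕ) : Prop :=
  ∀ x₁ x₂ : Fin n → ℝ, ∀ e₁ e₂ : Fin p × Fin n → ℝ,
    Sparse q e₁ → Sparse q e₂ →
      Φ.mulVec x₁ + e₁ = Φ.mulVec x₂ + e₂ → x₁ = x₂

/-- `(n-stacked)` cospark. -/
def cosparkN (Φ : Matrix (Fin p × Fin n) (Fin n) ℝ) : ℕ :=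
  sInf {m : ℕ | ∃ x : Fin n → ℝ, x ≠ 0 ∧ m = l0n (Φ.mulVec x)}

/-- `ρ_{p,q}(Φ)`. -/
def rho (Φ : Matrix (Fin p × Fin n) (Fin n) ℝ) (q : ℕ) : ℝ :=
  sInf {r | ∃ Λ : Finset (Fin p), Λ.card = p - q ∧ r = sigmaMin (zeroB Λ Φ)}

/-- `η_{p,q}(Φ)`. -/
def eta (Φ : Matrix (Fin p × Fin n) (Fin n) ℝ) (q : ℕ) : ℝ :=
  sSup {r | ∃ Λ : Finset (Fin p), Λ.card = p - q ∧
    ∃ i : Fin p, i ∉ Λ ∧ r = specNorm (rowBlk Φ i * pinv (zeroB Λ Φ))}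

/-- `κ^d_{p,q}(Φ)`. -/
def kappaD (Φ : Matrix (Fin p × Fin n) (Fin n) ℝ) (q : ℕ) : ℝ :=
  (Real.sqrt (p : ℝ) + 1) * Real.sqrt ((p - q : ℕ) : ℝ) / rho Φ q

/-- `κ^e_{p,q}(Φ)`. -/
def kappaE (Φ : Matrix (Fin p × Fin n) (Fin n) ℝ) (q : ℕ) : ℝ :=
  (eta Φ q * Real.sqrt ((p - q : ℕ) : ℝ) + 1) * (Real.sqrt (p : ℝ) + 1)

/-- The finite candidate set `F_{p,r}(ẑ)`. -/
def Fset (Φ : Matrix (Fin p × Fin n) (Fin n) ℝ) (r : ℕ) (z : Fin p × Fin n → ℝ) :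
    Set (Fin n → ℝ) :=
  {χ | ∃ Λ : Finset (Fin p), Λ.card = p - r ∧
    χ = (pinv (zeroB Λ Φ)).mulVec (zeroV Λ z)}

/-- `η'_{p,q,r}(Φ)`. -/
def eta' (Φ : Matrix (Fin p × Fin n) (Fin n) ℝ) (q r : ℕ) : ℝ :=
  sSup {a | ∃ Λ : Finset (Fin p), Λ.card = p - q ∧
    a = sInf {b | ∃ Λ' : Finset (Fin p), Λ' ⊆ Λ ∧ Λ'.card = p - r ∧
      b = sSup {c | ∃ i ∈ Λ \ Λ',
        c = specNorm (rowBlk Φ i * pinv (zeroB Λ' Φ))}}}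

/-- `ϑ_{p,q,r}(Φ)`. -/
def theta (Φ : Matrix (Fin p × Fin n) (Fin n) ℝ) (q r : ℕ) : ℝ :=
  max (eta' Φ q r * Real.sqrt ((p - r : ℕ) : ℝ) + 1) (Real.sqrt ((p - r : ℕ) : ℝ))

/-- `κ^c_{p,q,r}(Φ)`. -/
def kappaC (Φ : Matrix (Fin p × Fin n) (Fin n) ℝ) (q r : ℕ) : ℝ :=
  (theta Φ q r + 1) * Real.sqrt ((p - 2 * q : ℕ) : ℝ) / rho Φ (2 * q)

/-- `κ^{c'}_{p,q,r}(Φ)`. -/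
def kappaC' (Φ : Matrix (Fin p × Fin n) (Fin n) ℝ) (q r : ℕ) : ℝ :=
  (theta Φ q r - 1) / sSup {c | ∃ i : Fin p, c = specNorm (rowBlk Φ i)}

/-- Stacked observability matrix `G` with row-blocks `Gᵢ = [cᵢᵀ (cᵢA)ᵀ ⋯ (cᵢAⁿ⁻¹)ᵀ]ᵀ`. -/
def obsG (A : Matrix (Fin n) (Fin n) ℝ) (C : Matrix (Fin p) (Fin n) ℝ) :
    Matrix (Fin p × Fin n) (Fin n) ℝ :=
  fun ij k => (C * A ^ (ij.2 : ℕ)) ij.1 k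

/-- `C_Λ`: zero out the rows of `C` outside `Λ`. -/
def zeroRows (Λ : Finset (Fin p)) (C : Matrix (Fin p) (Fin n) ℝ) :
    Matrix (Fin p) (Fin n) ℝ :=
  fun i k => if i ∈ Λ then C i k else 0

/-- Observability of the pair `(A, C)`: the observability matrix has full column rank. -/
def Observable (A : Matrix (Fin n) (Fin n) ℝ) (C : Matrix (Fin p) (Fin n) ℝ) : Prop :=
  (obsG A C).rank = n

/-- `q`-redundant observability. -/
def RedObservable (A : Matrix (Fin n) (Fin n) ℝ) (C : Matrix (Fin p) (Fin n) ℝ)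
    (q : ℕ) : Prop :=
  ∀ Λ : Finset (Fin p), p - q ≤ Λ.card → Observable A (zeroRows Λ C)

/-- Euclidean norm of a complex vector. -/
def enormC {m : Type*} [Fintype m] (v : m → ℂ) : ℝ :=
  Real.sqrt (∑ i, ‖v i‖ ^ 2)

/-- The set `V(A)` of normalized complex eigenvectors of a real matrix `A`. -/
def eigSet (A : Matrix (Fin n) (Fin n) ℝ) : Set (Fin n → ℂ) :=
  {v | (∃ μ : ℂ, (A.map Complex.ofReal).mulVec v = μ • v) ∧ enormC v = 1}

/-- ℓ⁰ norm of a complex vector. -/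
def l0C (y : Fin p → ℂ) : ℕ := (Finset.univ.filter fun i => y i ≠ 0).card

/-- `n`-stacked ℓ⁰ norm of a complex stacked vector. -/
def l0nC (z : Fin p × Fin n → ℂ) : ℕ :=
  (Finset.univ.filter fun i => (fun j => z (i, j)) ≠ (0 : Fin n → ℂ)).card

/-- The dynamic security index `α_d(A, C)`. -/
def alphaD (A : Matrix (Fin n) (Fin n) ℝ) (C : Matrix (Fin p) (Fin n) ℝ) : ℕ :=
  sInf {m : ℕ | ∃ v ∈ eigSet A, m = l0C ((C.map Complex.ofReal).mulVec v)}

end SecureEst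

section Aux
open SecureEst

variable {n p : ℕ}

lemma eNorm2_eq' {m : Type*} [Fintype m] (x : m → ℝ) :
    eNorm2 x = ‖(WithLp.equiv 2 (m → ℝ)).symm x‖ := by
  rw [EuclideanSpace.norm_eq]
  unfold eNorm2
  congr 1
  refine Finset.sum_congr rfl fun i _ => ?_
  rw [show ((WithLp.equiv 2 (m → ℝ)).symm x).ofLp i = x i from rfl, Real.norm_eq_abs, sq_abs]

lemma eNorm2_nonneg' {m : Type*} [Fintype m] (x : m → ℝ) : 0 ≤ eNorm2 x :=
  Real.sqrt_nonneg _

lemma eNorm2_eq_zero' {m : Type*} [Fintype m] {x : m → ℝ} : eNorm2 x = 0 ↔ x = 0 := by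
  rw [eNorm2_eq', norm_eq_zero]
  exact (WithLp.equiv 2 (m → ℝ)).symm.injective.eq_iff' rfl

lemma eNorm2_pos' {m : Type*} [Fintype m] {x : m → ℝ} (hx : x ≠ 0) : 0 < eNorm2 x :=
  lt_of_le_of_ne (eNorm2_nonneg' _) (fun h => hx (eNorm2_eq_zero'.mp h.symm))

lemma eNorm2_sub_le' {m : Type*} [Fintype m] (x y : m → ℝ) :
    eNorm2 (x - y) ≤ eNorm2 x + eNorm2 y := by
  rw [eNorm2_eq', eNorm2_eq', eNorm2_eq']
  exact norm_sub_le ((WithLp.equiv 2 (m → ℝ)).symm x) ((WithLp.equiv 2 (m → ℝ)).symm y)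

lemma eNorm2_smul' {m : Type*} [Fintype m] (c : ℝ) (x : m → ℝ) :
    eNorm2 (c • x) = |c| * eNorm2 x := by
  rw [eNorm2_eq', eNorm2_eq',
    show ((WithLp.equiv 2 (m → ℝ)).symm (c • x)) = c • (WithLp.equiv 2 (m → ℝ)).symm x from rfl,
    norm_smul, Real.norm_eq_abs]

lemma eNorm2_sq' {m : Type*} [Fintype m] (x : m → ℝ) : eNorm2 x ^ 2 = ∑ i, x i ^ 2 :=
  Real.sq_sqrt (Finset.sum_nonneg fun i _ => sq_nonneg _)

lemma zeroB_mulVec_apply (Λ : Finset (Fin p)) (Φ : Matrix (Fin p × Fin n) (Fin n) ℝ)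
    (y : Fin n → ℝ) (ij : Fin p × Fin n) :
    (zeroB Λ Φ).mulVec y ij = if ij.1 ∈ Λ then Φ.mulVec y ij else 0 := by
  by_cases h : ij.1 ∈ Λ <;> simp [zeroB, Matrix.mulVec, dotProduct, h]

lemma eNorm2_zeroB_sq (Λ : Finset (Fin p)) (Φ : Matrix (Fin p × Fin n) (Fin n) ℝ)
    (y : Fin n → ℝ) :
    eNorm2 ((zeroB Λ Φ).mulVec y) ^ 2 = ∑ i ∈ Λ, eNorm2 ((rowBlk Φ i).mulVec y) ^ 2 := by
  rw [eNorm2_sq', Fintype.sum_prod_type]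
  rw [← Finset.sum_subset (Finset.subset_univ Λ)]
  · refine Finset.sum_congr rfl fun i hi => ?_
    rw [eNorm2_sq']
    refine Finset.sum_congr rfl fun j _ => ?_
    rw [zeroB_mulVec_apply, if_pos hi]
    rfl
  · intro i _ hi
    refine Finset.sum_eq_zero fun j _ => ?_
    rw [zeroB_mulVec_apply, if_neg hi]
    simp

lemma sigmaMin_nonneg {m k : Type*} [Fintype m] [Fintype k] (M : Matrix m k ℝ) :
    0 ≤ sigmaMin M :=
  Real.sInf_nonneg (by rintro r ⟨x, -, rfl⟩; exact eNorm2_nonneg' _)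

lemma sigmaMin_mul_le {m : Type*} [Fintype m] (M : Matrix m (Fin n) ℝ) (w : Fin n → ℝ) :
    sigmaMin M * eNorm2 w ≤ eNorm2 (M.mulVec w) := by
  rcases eq_or_ne w 0 with h | h
  · subst h
    rw [Matrix.mulVec_zero, eNorm2_eq_zero'.mpr rfl, mul_zero]
    exact eNorm2_nonneg' _
  · have hc0 : 0 < eNorm2 w := eNorm2_pos' h
    have hu1 : eNorm2 ((eNorm2 w)⁻¹ • w) = 1 := by
      rw [eNorm2_smul', abs_of_nonneg (inv_nonneg.mpr hc0.le), inv_mul_cancel₀ hc0.ne']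
    have hle : sigmaMin M ≤ eNorm2 (M.mulVec ((eNorm2 w)⁻¹ • w)) := by
      refine csInf_le ⟨0, ?_⟩ ⟨(eNorm2 w)⁻¹ • w, hu1, rfl⟩
      rintro b ⟨x, -, rfl⟩; exact eNorm2_nonneg' _
    rw [Matrix.mulVec_smul, eNorm2_smul', abs_of_nonneg (inv_nonneg.mpr hc0.le)] at hle
    calc sigmaMin M * eNorm2 w ≤ (eNorm2 w)⁻¹ * eNorm2 (M.mulVec w) * eNorm2 w :=
          mul_le_mul_of_nonneg_right hle (eNorm2_nonneg' _)
      _ = eNorm2 (M.mulVec w) := by field_simp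

lemma rho_nonneg' (Φ : Matrix (Fin p × Fin n) (Fin n) ℝ) (q : ℕ) : 0 ≤ rho Φ q :=
  Real.sInf_nonneg (by rintro r ⟨Λ, -, rfl⟩; exact sigmaMin_nonneg _)

lemma rho_le_sigmaMin (Φ : Matrix (Fin p × Fin n) (Fin n) ℝ) {q : ℕ}
    {Λ : Finset (Fin p)} (hΛ : Λ.card = p - q) : rho Φ q ≤ sigmaMin (zeroB Λ Φ) :=
  csInf_le ⟨0, by rintro b ⟨Λ', -, rfl⟩; exact sigmaMin_nonneg _⟩ ⟨Λ, hΛ, rfl⟩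

lemma sigmaMin_pos {m : Type*} [Fintype m] (hn : 0 < n) (M : Matrix m (Fin n) ℝ)
    (hM : ∀ u : Fin n → ℝ, M.mulVec u = 0 → u = 0) : 0 < sigmaMin M := by
  classical
  haveI : Nonempty (Fin n) := ⟨⟨0, hn⟩⟩
  set L : EuclideanSpace ℝ (Fin n) →ₗ[ℝ] EuclideanSpace ℝ m :=
    (WithLp.linearEquiv 2 ℝ (m → ℝ)).symm.toLinearMap ∘ₗ M.mulVecLin ∘ₗ
      (WithLp.linearEquiv 2 ℝ (Fin n → ℝ)).toLinearMap with hLdef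
  have hLc : Continuous L := L.continuous_of_finiteDimensional
  have hLval : ∀ y : EuclideanSpace ℝ (Fin n),
      ‖L y‖ = eNorm2 (M.mulVec ((WithLp.equiv 2 (Fin n → ℝ)) y)) := by
    intro y
    rw [eNorm2_eq']
    rfl
  have hg : Continuous fun y : EuclideanSpace ℝ (Fin n) => ‖L y‖ := hLc.norm
  have hsph : IsCompact (Metric.sphere (0 : EuclideanSpace ℝ (Fin n)) 1) :=
    isCompact_sphere _ _
  have hne : (Metric.sphere (0 : EuclideanSpace ℝ (Fin n)) 1).Nonempty := by
    refine ⟨EuclideanSpace.single ⟨0, hn⟩ (1 : ℝ), ?_⟩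
    rw [mem_sphere_zero_iff_norm, EuclideanSpace.norm_single, norm_one]
  obtain ⟨y₀, hy₀, hmin⟩ := hsph.exists_isMinOn hne hg.continuousOn
  have hy₀n : ‖y₀‖ = 1 := mem_sphere_zero_iff_norm.mp hy₀
  have hpos : 0 < ‖L y₀‖ := by
    rw [hLval]
    refine eNorm2_pos' fun h0 => ?_
    have := hM _ h0
    apply one_ne_zero (α := ℝ)
    rw [← hy₀n]
    have hy0 : y₀ = 0 := by
      have : (WithLp.equiv 2 (Fin n → ℝ)).symm ((WithLp.equiv 2 (Fin n → ℝ)) y₀) =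
          (WithLp.equiv 2 (Fin n → ℝ)).symm 0 := by rw [this]
      simpa using this
    rw [hy0, norm_zero]
  refine lt_of_lt_of_le hpos (le_csInf ?_ ?_)
  · refine ⟨eNorm2 (M.mulVec ((WithLp.equiv 2 (Fin n → ℝ)) y₀)),
      (WithLp.equiv 2 (Fin n → ℝ)) y₀, ?_, rfl⟩
    rw [eNorm2_eq']
    simpa using hy₀n
  · rintro b ⟨xx, hxx, rfl⟩
    have hmem : (WithLp.equiv 2 (Fin n → ℝ)).symm xx ∈
        Metric.sphere (0 : EuclideanSpace ℝ (Fin n)) 1 := by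
      rw [mem_sphere_zero_iff_norm, ← eNorm2_eq', hxx]
    have hle2 : ‖L y₀‖ ≤ ‖L ((WithLp.equiv 2 (Fin n → ℝ)).symm xx)‖ := hmin hmem
    simp only [hLval] at hle2
    rw [hLval]
    simpa using hle2

lemma zeroB_ker (Φ : Matrix (Fin p × Fin n) (Fin n) ℝ) {q : ℕ}
    (hc : ErrCorrectable Φ q) {Λ : Finset (Fin p)} (hΛ : Λ.card = p - 2 * q)
    (u : Fin n → ℝ) (hu : (zeroB Λ Φ).mulVec u = 0) : u = 0 := by
  classical
  set g := Φ.mulVec u with hg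
  have hzero : ∀ i ∈ Λ, ∀ j, g (i, j) = 0 := by
    intro i hi j
    have h := congrFun hu (i, j)
    rwa [zeroB_mulVec_apply, if_pos hi] at h
  set Λc := Finset.univ \ Λ with hΛc
  have hk : Λc.card = p - Λ.card := by
    rw [hΛc, Finset.card_sdiff_of_subset (Finset.subset_univ _), Finset.card_univ, Fintype.card_fin]
  have hΛle : Λ.card ≤ p := by
    have h := Finset.card_le_card (Finset.subset_univ Λ)
    simpa using h
  obtain ⟨A, hAsub, hAcard⟩ := Finset.exists_subset_card_eq (s := Λc) (n := Λc.card - q) (Nat.sub_le _ _)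
  have hAq : A.card ≤ q := by omega
  have hBq : (Λc \ A).card ≤ q := by
    rw [Finset.card_sdiff_of_subset hAsub]; omega
  set e₁ : Fin p × Fin n → ℝ := fun ij => if ij.1 ∈ A then -g ij else 0 with he₁
  set e₂ : Fin p × Fin n → ℝ := fun ij => if ij.1 ∈ Λc \ A then g ij else 0 with he₂
  have hs₁ : Sparse q e₁ := by
    refine le_trans (Finset.card_le_card ?_) hAq
    intro i hi
    simp only [blockSupp, Finset.mem_filter, Finset.mem_univ, true_and] at hi
    by_contra hiA
    exact hi (funext fun j => if_neg hiA)
  have hs₂ : Sparse q e₂ := by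
    refine le_trans (Finset.card_le_card ?_) hBq
    intro i hi
    simp only [blockSupp, Finset.mem_filter, Finset.mem_univ, true_and] at hi
    by_contra hiA
    exact hi (funext fun j => if_neg hiA)
  have heq : Φ.mulVec u + e₁ = Φ.mulVec 0 + e₂ := by
    funext ij
    obtain ⟨i, j⟩ := ij
    simp only [Pi.add_apply, Matrix.mulVec_zero, Pi.zero_apply, zero_add, he₁, he₂]
    by_cases hiΛ : i ∈ Λ
    · have hiA : i ∉ A := fun h => (Finset.mem_sdiff.mp (hAsub h)).2 hiΛ
      have hiB : i ∉ Λc \ A := fun h => (Finset.mem_sdiff.mp (Finset.mem_sdiff.mp h).1).2 hiΛ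
      rw [if_neg hiA, if_neg hiB, add_zero]
      exact hzero i hiΛ j
    · by_cases hiA : i ∈ A
      · have hiB : i ∉ Λc \ A := fun h => (Finset.mem_sdiff.mp h).2 hiA
        rw [if_pos hiA, if_neg hiB]
        show g (i, j) + -g (i, j) = 0
        ring
      · have hiB : i ∈ Λc \ A :=
          Finset.mem_sdiff.mpr ⟨Finset.mem_sdiff.mpr ⟨Finset.mem_univ _, hiΛ⟩, hiA⟩
        rw [if_neg hiA, if_pos hiB, add_zero]
  exact hc u 0 e₁ e₂ hs₁ hs₂ heq

lemma rho_pos (Φ : Matrix (Fin p × Fin n) (Fin n) ℝ) {q : ℕ}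
    (hc : ErrCorrectable Φ q) (hn : 0 < n) : 0 < rho Φ (2 * q) := by
  classical
  set T := {r | ∃ Λ : Finset (Fin p), Λ.card = p - 2 * q ∧ r = sigmaMin (zeroB Λ Φ)} with hT
  have hfin : T.Finite := by
    have hsub : T ⊆ (fun Λ : Finset (Fin p) => sigmaMin (zeroB Λ Φ)) '' Set.univ := by
      rintro b ⟨Λ, -, rfl⟩; exact ⟨Λ, trivial, rfl⟩
    exact ((Set.finite_univ).image _).subset hsub
  have hne : T.Nonempty := by
    obtain ⟨Λ₀, -, hΛ₀⟩ := Finset.exists_subset_card_eq (s := (Finset.univ : Finset (Fin p)))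
      (n := p - 2 * q) (by simpa using Nat.sub_le p (2 * q))
    exact ⟨sigmaMin (zeroB Λ₀ Φ), Λ₀, hΛ₀, rfl⟩
  have hmem : sInf T ∈ T := hne.csInf_mem hfin
  obtain ⟨Λ, hΛ, hEq⟩ := hmem
  show 0 < sInf T
  rw [hEq]
  exact sigmaMin_pos hn _ (zeroB_ker Φ hc hΛ)

end Aux

open SecureEst in
/-- Theorem 4.(i): if `xhat` satisfies
`|{i : ‖zhatᵢ − Φ_{Γᵢⁿ}xhat‖₂ > v'_max}| ≤ q` then `‖xhat − x‖₂ ≤ κ^c_{p,q,r}(Φ) v_max`. -/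
theorem few_large_residuals_implies_close {n p : ℕ}
    (Φ : Matrix (Fin p × Fin n) (Fin n) ℝ) (q r : ℕ)
    (hc : ErrCorrectable Φ q) (hqr : q ≤ r) (hr2q : r ≤ 2 * q)
    (x : Fin n → ℝ) (e v : Fin p × Fin n → ℝ) (vmax : ℝ)
    (he : Sparse q e) (hv : ∀ i : Fin p, eNorm2 (blk v i) ≤ vmax)
    (zhat : Fin p × Fin n → ℝ) (hz : zhat = Φ.mulVec x + e + v)
    (xhat : Fin n → ℝ)
    (hcount : (Finset.univ.filter fun i : Fin p =>
        theta Φ q r * vmax < eNorm2 (blk zhat i - (rowBlk Φ i).mulVec xhat)).card ≤ q) :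
    eNorm2 (xhat - x) ≤ kappaC Φ q r * vmax := by
  classical
  rcases Nat.eq_zero_or_pos p with hp | hp
  · subst hp
    have hx : xhat = x := by
      refine hc xhat x 0 0 ?_ ?_ ?_
      · simp [Sparse, l0n, blockSupp, blk]
      · simp [Sparse, l0n, blockSupp, blk]
      · funext ij; exact ij.1.elim0
    have h1 : eNorm2 (xhat - x) = 0 := by
      rw [hx, sub_self]; exact eNorm2_eq_zero'.mpr rfl
    have h2 : kappaC Φ q r = 0 := by
      have h0 : (0 - 2 * q : ℕ) = 0 := Nat.zero_sub _
      rw [kappaC, h0]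
      simp
    rw [h1, h2, zero_mul]
  · have hvmax : 0 ≤ vmax := le_trans (eNorm2_nonneg' _) (hv ⟨0, hp⟩)
    have hθ : 0 ≤ theta Φ q r := le_trans (Real.sqrt_nonneg _) (le_max_right _ _)
    set w := xhat - x with hw
    rcases eq_or_ne w 0 with hw0 | hw0
    · rw [hw0, eNorm2_eq_zero'.mpr rfl]
      have hk : 0 ≤ kappaC Φ q r :=
        div_nonneg (mul_nonneg (by linarith) (Real.sqrt_nonneg _)) (rho_nonneg' Φ _)
      exact mul_nonneg hk hvmax
    · have hn : 0 < n := by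
        rcases Nat.eq_zero_or_pos n with h | h
        · subst h; exact absurd (funext fun j => j.elim0) hw0
        · exact h
      set S := Finset.univ.filter fun i : Fin p =>
        theta Φ q r * vmax < eNorm2 (blk zhat i - (rowBlk Φ i).mulVec xhat) with hSdef
      set E := blockSupp e with hEdef
      have hEq : E.card ≤ q := he
      have hU : p - 2 * q ≤ (Finset.univ \ (S ∪ E)).card := by
        rw [Finset.card_sdiff_of_subset (Finset.subset_univ _), Finset.card_univ, Fintype.card_fin]
        have h1 := Finset.card_union_le S E
        have h2 : (S ∪ E).card ≤ p := by
          have := Finset.card_le_card (Finset.subset_univ (S ∪ E))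
          simpa using this
        omega
      obtain ⟨Λ, hΛsub, hΛcard⟩ := Finset.exists_subset_card_eq (s := _) (n := p - 2 * q) hU
      have key : ∀ i ∈ Λ, eNorm2 ((rowBlk Φ i).mulVec w) ≤ (theta Φ q r + 1) * vmax := by
        intro i hi
        have hi' := hΛsub hi
        rw [Finset.mem_sdiff, Finset.mem_union] at hi'
        obtain ⟨-, hiSE⟩ := hi'
        have hiS : i ∉ S := fun h => hiSE (Or.inl h)
        have hiE : i ∉ E := fun h => hiSE (Or.inr h)
        have hres : eNorm2 (blk zhat i - (rowBlk Φ i).mulVec xhat) ≤ theta Φ q r * vmax := by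
          by_contra hlt
          exact hiS (Finset.mem_filter.mpr ⟨Finset.mem_univ _, lt_of_not_ge hlt⟩)
        have hei : blk e i = 0 := by
          by_contra hne
          exact hiE (Finset.mem_filter.mpr ⟨Finset.mem_univ _, hne⟩)
        have hblk : blk zhat i = (rowBlk Φ i).mulVec x + blk v i := by
          funext j
          have he0 : e (i, j) = 0 := congrFun hei j
          show zhat (i, j) = (rowBlk Φ i).mulVec x j + v (i, j)
          rw [hz]
          show Φ.mulVec x (i, j) + e (i, j) + v (i, j) = (rowBlk Φ i).mulVec x j + v (i, j)
          rw [he0, add_zero]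
          rfl
        have hdec : (rowBlk Φ i).mulVec w =
            blk v i - (blk zhat i - (rowBlk Φ i).mulVec xhat) := by
          rw [hblk, hw, Matrix.mulVec_sub]
          abel
        rw [hdec]
        calc eNorm2 (blk v i - (blk zhat i - (rowBlk Φ i).mulVec xhat))
            ≤ eNorm2 (blk v i) + eNorm2 (blk zhat i - (rowBlk Φ i).mulVec xhat) :=
              eNorm2_sub_le' _ _
          _ ≤ vmax + theta Φ q r * vmax := add_le_add (hv i) hres
          _ = (theta Φ q r + 1) * vmax := by ring
      set B := (theta Φ q r + 1) * vmax with hB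
      have hB0 : 0 ≤ B := mul_nonneg (by linarith) hvmax
      have hsum : eNorm2 ((zeroB Λ Φ).mulVec w) ^ 2 ≤ ((p - 2 * q : ℕ) : ℝ) * B ^ 2 := by
        rw [eNorm2_zeroB_sq]
        calc ∑ i ∈ Λ, eNorm2 ((rowBlk Φ i).mulVec w) ^ 2 ≤ ∑ _i ∈ Λ, B ^ 2 :=
              Finset.sum_le_sum fun i hi => pow_le_pow_left₀ (eNorm2_nonneg' _) (key i hi) 2
          _ = (Λ.card : ℝ) * B ^ 2 := by rw [Finset.sum_const, nsmul_eq_mul]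
          _ = ((p - 2 * q : ℕ) : ℝ) * B ^ 2 := by rw [hΛcard]
      have hnorm : eNorm2 ((zeroB Λ Φ).mulVec w) ≤ Real.sqrt ((p - 2 * q : ℕ) : ℝ) * B := by
        rw [(Real.sqrt_sq (eNorm2_nonneg' ((zeroB Λ Φ).mulVec w))).symm]
        calc Real.sqrt (eNorm2 ((zeroB Λ Φ).mulVec w) ^ 2)
            ≤ Real.sqrt (((p - 2 * q : ℕ) : ℝ) * B ^ 2) := Real.sqrt_le_sqrt hsum
          _ = Real.sqrt ((p - 2 * q : ℕ) : ℝ) * B := by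
              rw [Real.sqrt_mul (Nat.cast_nonneg _), Real.sqrt_sq hB0]
      have hρpos : 0 < rho Φ (2 * q) := rho_pos Φ hc hn
      have hchain : rho Φ (2 * q) * eNorm2 w ≤ Real.sqrt ((p - 2 * q : ℕ) : ℝ) * B :=
        calc rho Φ (2 * q) * eNorm2 w ≤ sigmaMin (zeroB Λ Φ) * eNorm2 w :=
              mul_le_mul_of_nonneg_right (rho_le_sigmaMin Φ hΛcard) (eNorm2_nonneg' _)
          _ ≤ eNorm2 ((zeroB Λ Φ).mulVec w) := sigmaMin_mul_le _ _
          _ ≤ Real.sqrt ((p - 2 * q : ℕ) : ℝ) * B := hnorm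
      rw [kappaC, div_mul_eq_mul_div, le_div_iff₀ hρpos]
      calc eNorm2 w * rho Φ (2 * q) = rho Φ (2 * q) * eNorm2 w := mul_comm _ _
        _ ≤ Real.sqrt ((p - 2 * q : ℕ) : ℝ) * B := hchain
        _ = (theta Φ q r + 1) * Real.sqrt ((p - 2 * q : ℕ) : ℝ) * vmax := by rw [hB]; ring
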